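/- Let $b_0 > 0$, $p \in (0, 1)$, and let $d_1, \dots, d_T$ be vectors in $\mathbb{R}^d$. Let $(a_t)_{t \ge 1}$ be a nonincreasing sequence in $(0, 1]$ and set $q = (1-p)/2$ and $b_t = (b_0^{1/p} + \sum_{i=1}^t \|d_i\|^2)^p / a_{t+1}^q$. Then $\sum_{t=1}^{T} \frac{\|d_t\|^2}{b_t} \ge a_{T+1}^q \left(\sum_{i=1}^T \|d_i\|^2\right)^{1-p} - b_0^{1/p - 1}$. -/

import Mathlib

open Finset

theorem stmt18 {d : ℕ} (T : ℕ) (hT : 1 ≤ T) (b₀ p : ℝ) (hb₀ : 0 < b₀)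
    (hp0 : 0 < p) (hp1 : p < 1) (v : ℕ → EuclideanSpace ℝ (Fin d))
    (a : ℕ → ℝ) (ha0 : ∀ t, 0 < a t) (ha1 : ∀ t, a t ≤ 1)
    (hmono : ∀ t, a (t + 1) ≤ a t) (b : ℕ → ℝ)
    (hb : ∀ t, b t =
      (b₀ ^ (1 / p) + ∑ i ∈ Icc 1 t, ‖v i‖ ^ 2) ^ p / a (t + 1) ^ ((1 - p) / 2)) :
    a (T + 1) ^ ((1 - p) / 2) * (∑ i ∈ Icc 1 T, ‖v i‖ ^ 2) ^ (1 - p) -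
        b₀ ^ (1 / p - 1) ≤
      ∑ t ∈ Icc 1 T, ‖v t‖ ^ 2 / b t := by
  set q : ℝ := (1 - p) / 2 with hq
  have hq0 : 0 ≤ q := div_nonneg (by linarith) (by norm_num)
  set B : ℝ := b₀ ^ (1 / p) with hBdef
  have hB : 0 < B := Real.rpow_pos_of_pos hb₀ _
  set X : ℝ := ∑ i ∈ Icc 1 T, ‖v i‖ ^ 2 with hXdef
  have hX0 : 0 ≤ X := Finset.sum_nonneg fun i _ => by positivity
  have hBX : (0:ℝ) < B + X := by linarith
  have haanti : ∀ m n : ℕ, m ≤ n → a n ≤ a m :=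
    fun m n h => antitone_nat_of_succ_le hmono h
  have hB1 : b₀ ^ (1 / p - 1) = B ^ (1 - p) := by
    rw [hBdef, ← Real.rpow_mul hb₀.le]
    congr 1
    field_simp
  have haq1 : a (T + 1) ^ q ≤ 1 :=
    Real.rpow_le_one (ha0 _).le (ha1 _) hq0
  have haqpos : 0 < a (T + 1) ^ q := Real.rpow_pos_of_pos (ha0 _) _
  -- step 1 : pointwise bound
  have step1 : a (T + 1) ^ q * X / (B + X) ^ p ≤ ∑ t ∈ Icc 1 T, ‖v t‖ ^ 2 / b t := by
    rw [mul_div_assoc, hXdef, Finset.sum_div, Finset.mul_sum]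
    refine Finset.sum_le_sum fun t ht => ?_
    rw [hb t, div_div_eq_mul_div]
    have hSt : (0:ℝ) < B + ∑ i ∈ Icc 1 t, ‖v i‖ ^ 2 := by
      have : (0:ℝ) ≤ ∑ i ∈ Icc 1 t, ‖v i‖ ^ 2 := Finset.sum_nonneg fun i _ => by positivity
      linarith
    have hSle : B + ∑ i ∈ Icc 1 t, ‖v i‖ ^ 2 ≤ B + X := by
      refine add_le_add_right (Finset.sum_le_sum_of_subset_of_nonneg ?_ fun i _ _ => by positivity) _
      exact Finset.Icc_subset_Icc_right (Finset.mem_Icc.mp ht).2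
    have haa : a (T + 1) ^ q ≤ a (t + 1) ^ q :=
      Real.rpow_le_rpow (ha0 _).le (haanti _ _ (Nat.succ_le_succ (Finset.mem_Icc.mp ht).2)) hq0
    rw [← mul_div_assoc]
    refine div_le_div₀ (mul_nonneg (by positivity) (Real.rpow_nonneg (ha0 _).le _)) ?_ (Real.rpow_pos_of_pos hSt _)
      (Real.rpow_le_rpow hSt.le hSle hp0.le)
    rw [mul_comm]
    exact mul_le_mul_of_nonneg_left haa (by positivity)
  refine le_trans ?_ step1
  rw [hB1]
  -- key inequality
  have key : X ^ (1 - p) - B ^ (1 - p) ≤ X / (B + X) ^ p := by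
    have h1 : X / (B + X) ^ p = (B + X) ^ (1 - p) - B / (B + X) ^ p := by
      rw [Real.rpow_sub hBX, Real.rpow_one, div_sub_div_same]
      congr 1
      ring
    have h2 : B / (B + X) ^ p ≤ B ^ (1 - p) := by
      rw [Real.rpow_sub hB, Real.rpow_one]
      exact div_le_div_of_nonneg_left hB.le (Real.rpow_pos_of_pos hB _)
        (Real.rpow_le_rpow hB.le (by linarith) hp0.le)
    have h3 : X ^ (1 - p) ≤ (B + X) ^ (1 - p) :=
      Real.rpow_le_rpow hX0 (by linarith) (by linarith)
    linarith
  have hBp : (0:ℝ) ≤ B ^ (1 - p) := (Real.rpow_pos_of_pos hB _).le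
  have h4 : a (T + 1) ^ q * (X ^ (1 - p) - B ^ (1 - p)) ≤ a (T + 1) ^ q * (X / (B + X) ^ p) :=
    mul_le_mul_of_nonneg_left key haqpos.le
  have h5 : a (T + 1) ^ q * B ^ (1 - p) ≤ B ^ (1 - p) := by
    nlinarith
  rw [mul_div_assoc]
  nlinarith [h4, h5]
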